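/- Let k > 0, let Q : ℝ → ℝ be slope-restricted on [0,k], and let g ∈ ℝ satisfy 1 + gk > 0 (equivalently 1/k + g > 0). Then for every r̄ ∈ ℝ there exists a unique ȳ ∈ ℝ such that ȳ = Q(r̄ − g·ȳ). (This defines the steady-state map r̄ ↦ ȳ of the Lurye feedback loop with static gain g and nonlinearity Q.) -/

import Mathlib

/-- `Q` is slope-restricted on `[0, k]`:
`0 ≤ Q(x₁) − Q(x₂) ≤ k(x₁ − x₂)` whenever `x₁ ≥ x₂`. -/
def SlopeRestricted (Q : ℝ → ℝ) (k : ℝ) : Prop :=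
  ∀ x₁ x₂ : ℝ, x₂ ≤ x₁ → 0 ≤ Q x₁ - Q x₂ ∧ Q x₁ - Q x₂ ≤ k * (x₁ - x₂)

/-- For `Q` slope-restricted on `[0,k]` and a static gain `g` with `1 + gk > 0`, the
fixed-point equation `ȳ = Q(r̄ − g ȳ)` of the Lurye loop has a unique solution for
every constant input `r̄`: the steady-state map is well defined. -/
theorem steady_state_map_exists_unique (k : ℝ) (hk : 0 < k)
    (Q : ℝ → ℝ) (hQ : SlopeRestricted Q k) (g : ℝ) (hg : 0 < 1 + g * k)
    (rbar : ℝ) :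
    ∃! ybar : ℝ, ybar = Q (rbar - g * ybar) := by
  set c : ℝ := min 1 (1 + g * k) with hc
  have hcpos : 0 < c := lt_min one_pos hg
  set F : ℝ → ℝ := fun y => y - Q (rbar - g * y) with hF
  have key : ∀ y₂ y₁ : ℝ, y₂ ≤ y₁ → c * (y₁ - y₂) ≤ F y₁ - F y₂ := by
    intro y₂ y₁ h
    rcases le_or_gt 0 g with hg0 | hg0
    · have hle : rbar - g * y₁ ≤ rbar - g * y₂ := by nlinarith
      obtain ⟨h1, h2⟩ := hQ _ _ hle
      have hc1 : c ≤ 1 := min_le_left _ _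
      simp only [hF]
      nlinarith
    · have hle : rbar - g * y₂ ≤ rbar - g * y₁ := by nlinarith
      obtain ⟨h1, h2⟩ := hQ _ _ hle
      have hc2 : c ≤ 1 + g * k := min_le_right _ _
      simp only [hF]
      nlinarith
  have hQcont : Continuous Q := by
    have hlip : LipschitzWith ⟨k, hk.le⟩ Q := by
      apply LipschitzWith.of_dist_le_mul
      intro x y
      rcases le_total y x with h | h
      · obtain ⟨h1, h2⟩ := hQ x y h
        rw [Real.dist_eq, Real.dist_eq, abs_of_nonneg h1,
          abs_of_nonneg (by linarith : (0:ℝ) ≤ x - y)]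
        exact h2
      · obtain ⟨h1, h2⟩ := hQ y x h
        rw [Real.dist_eq, Real.dist_eq, abs_of_nonpos (by linarith : Q x - Q y ≤ 0),
          abs_of_nonpos (by linarith : x - y ≤ 0)]
        show -(Q x - Q y) ≤ k * -(x - y)
        linarith
    exact hlip.continuous
  have hFcont : Continuous F := by
    apply continuous_id.sub
    exact hQcont.comp (by continuity)
  set M : ℝ := (|F 0| + 1) / c with hM
  have hMpos : 0 < M := div_pos (by positivity) hcpos
  have hcM : c * M = |F 0| + 1 := by
    rw [hM]; field_simp
  have habs : -|F 0| ≤ F 0 := neg_abs_le _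
  have habs' : F 0 ≤ |F 0| := le_abs_self _
  have hFM : 0 < F M := by
    have h := key 0 M hMpos.le
    nlinarith
  have hFm : F (-M) < 0 := by
    have h := key (-M) 0 (by linarith)
    nlinarith
  have hsub := intermediate_value_Icc (by linarith : -M ≤ M) hFcont.continuousOn
  have h0mem : (0:ℝ) ∈ Set.Icc (F (-M)) (F M) := ⟨hFm.le, hFM.le⟩
  obtain ⟨y, _, hy⟩ := hsub h0mem
  refine ⟨y, ?_, ?_⟩
  · have : y - Q (rbar - g * y) = 0 := hy
    linarith
  · intro z hz
    have hFz : F z = 0 := by simp only [hF]; linarith [hz.symm ▸ (rfl : z = z)]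
    have hFy : F y = 0 := hy
    rcases le_total z y with h | h
    · have := key z y h
      nlinarith
    · have := key y z h
      nlinarith
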